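/- Let A be an associative k-algebra, L ∈ A, and Z ∈ A invertible with LZ − ZL = Z. Define l_{-1} = Z^{-1} and l_n = L(ZL)^n for n ≥ 0. Then for all n ≥ 0: l_{-1} l_n − l_n l_{-1} = (n + 1) l_{n-1}. -/
import Mathlib


/-- `l_m` for `m ≥ -1`: `l_{-1} = Z⁻¹` and `l_m = L (Z L)^m` for `m ≥ 0`. -/
noncomputable def lop {A : Type} [Ring A] (L : A) (Z : Aˣ) (m : ℤ) : A :=
  if m = -1 then (↑(Z⁻¹) : A) else L * ((↑Z : A) * L) ^ m.toNat

/-- `[l_0, l_m] = m l_m` : auxiliary commutator identity. -/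
lemma virasoro_aux_comm {A : Type} [Ring A] (L Z : A) (hZ : L * Z - Z * L = Z) (m : ℕ) :
    L * (L * (Z * L) ^ m) - (L * (Z * L) ^ m) * L = m • (L * (Z * L) ^ m) := by
  induction m with
  | zero => simp
  | succ m ih =>
    have key : L * (L * (Z * L) ^ m)
        = (L * (Z * L) ^ m) * L + m • (L * (Z * L) ^ m) := eq_add_of_sub_eq' ih
    rw [pow_succ]
    calc L * (L * ((Z * L) ^ m * (Z * L))) - L * ((Z * L) ^ m * (Z * L)) * L
        = (L * (L * (Z * L) ^ m)) * (Z * L) - (L * (Z * L) ^ m) * ((Z * L) * L) := by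
          noncomm_ring
      _ = ((L * (Z * L) ^ m) * L + m • (L * (Z * L) ^ m)) * (Z * L)
            - (L * (Z * L) ^ m) * ((Z * L) * L) := by rw [key]
      _ = (L * (Z * L) ^ m) * (L * Z - Z * L) * L
            + m • (L * ((Z * L) ^ m * (Z * L))) := by noncomm_ring
      _ = (L * (Z * L) ^ m) * Z * L + m • (L * ((Z * L) ^ m * (Z * L))) := by rw [hZ]
      _ = (m + 1) • (L * ((Z * L) ^ m * (Z * L))) := by
          rw [succ_nsmul]; noncomm_ring

/-- The `m = -1` case of the Virasoro bracket relation: if `Z` is invertible and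
`L Z - Z L = Z`, then with `l_{-1} = Z⁻¹` and `l_n = L (Z L)^n` we have
`l_{-1} l_n - l_n l_{-1} = (n + 1) l_{n-1}` for all `n ≥ 0`. -/
theorem virasoro_bracket_neg_one {k A : Type} [CommRing k] [Ring A] [Algebra k A]
    (L : A) (Z : Aˣ) (h : L * (↑Z : A) - (↑Z : A) * L = (↑Z : A)) (n : ℕ) :
    lop L Z (-1) * lop L Z (n : ℤ) - lop L Z (n : ℤ) * lop L Z (-1)
      = ((n : ℤ) + 1) • lop L Z ((n : ℤ) - 1) := by
  have hLZ : L * (↑Z : A) = (↑Z : A) * L + (↑Z : A) := eq_add_of_sub_eq' h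
  -- Z⁻¹ L = L Z⁻¹ + Z⁻¹
  have h1 : (↑Z⁻¹ : A) * L = L * (↑Z⁻¹ : A) + (↑Z⁻¹ : A) := by
    have := congrArg (fun x => (↑Z⁻¹ : A) * x * (↑Z⁻¹ : A)) hLZ
    simpa [mul_add, add_mul, mul_assoc, Units.inv_mul, Units.mul_inv,
      ← mul_assoc] using this
  -- (Z L) Z⁻¹ = L - 1
  have hZL : (↑Z : A) * L = L * (↑Z : A) - (↑Z : A) := eq_sub_of_add_eq hLZ.symm
  have h2 : (↑Z : A) * L * (↑Z⁻¹ : A) = L - 1 := by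
    rw [hZL, sub_mul, mul_assoc]
    simp [Units.mul_inv]
  cases n with
  | zero =>
    simp only [lop, Nat.cast_zero, zero_sub, pow_zero, mul_one]
    norm_num
    rw [h1]
    abel
  | succ n =>
    have hne : ((n : ℤ) + 1 : ℤ) ≠ -1 := by omega
    have hne' : ((n : ℤ) + 1 - 1 : ℤ) ≠ -1 := by omega
    simp only [lop, Nat.cast_succ, if_neg hne, if_neg hne']
    simp only [if_true]
    have ht1 : ((n : ℤ) + 1).toNat = n + 1 := by omega
    have ht2 : ((n : ℤ) + 1 - 1).toNat = n := by omega
    rw [ht1, ht2]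
    have hcomm := virasoro_aux_comm L (↑Z : A) h n
    set P : A := L * ((↑Z : A) * L) ^ n with hP
    -- left piece: Z⁻¹ * l_{n+1} = (L*L + L) * (ZL)^n
    have e1 : (↑Z⁻¹ : A) * (L * ((↑Z : A) * L) ^ (n + 1))
        = L * P + P := by
      rw [pow_succ']
      calc (↑Z⁻¹ : A) * (L * ((↑Z : A) * L * ((↑Z : A) * L) ^ n))
          = ((↑Z⁻¹ : A) * L * (↑Z : A)) * (L * ((↑Z : A) * L) ^ n) := by noncomm_ring
        _ = ((L * (↑Z⁻¹ : A) + (↑Z⁻¹ : A)) * (↑Z : A)) * (L * ((↑Z : A) * L) ^ n) := by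
            rw [h1]
        _ = L * P + P := by
            simp [add_mul, mul_assoc, Units.inv_mul, hP]
    -- right piece: l_{n+1} * Z⁻¹ = P * (L - 1)
    have e2 : (L * ((↑Z : A) * L) ^ (n + 1)) * (↑Z⁻¹ : A) = P * (L - 1) := by
      rw [pow_succ]
      rw [← h2, hP]
      noncomm_ring
    rw [e1, e2]
    have : L * P - P * L = (n : A) * P := by
      have := hcomm
      rw [nsmul_eq_mul] at this
      exact this
    have h3 : L * P = (n : A) * P + P * L := sub_eq_iff_eq_add.mp this
    have goal : L * P + P - P * (L - 1) = ((n : A) + 2) * P := by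
      rw [h3]; noncomm_ring
    rw [goal]
    have : (((n : ℤ) + 1 + 1) : ℤ) • P = (((n : A) + 2)) * P := by
      rw [zsmul_eq_mul]
      push_cast
      noncomm_ring
    rw [this]
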